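/- The n-dimensional Leibniz algebra NGF₁ (with [e₁,e₁] = e₃, [eᵢ,e₁] = e_{i+1} for 2 ≤ i ≤ n-1, other products zero) admits a connected ℤ-gradation of length n: setting V_{-1} = span{e₁ - e₂}, V_{n-2} = span{e₂}, and Vᵢ = span{e_{n-i}} for 0 ≤ i ≤ n-3, one has L = V_{-1} ⊕ V₀ ⊕ ⋯ ⊕ V_{n-2} with [Vᵢ, Vⱼ] ⊆ V_{i+j} for all i, j. -/
import Mathlib


/-- NGF₁ admits a connected ℤ-gradation of length n: with
V₋₁ = span{e₁ - e₂}, V_{n-2} = span{e₂}, Vᵢ = span{e_{n-i}} for 0 ≤ i ≤ n-3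
(and Vᵢ = 0 otherwise), one has L = ⊕ Vᵢ with [Vᵢ,Vⱼ] ⊆ V_{i+j}. -/
theorem NGF1_maximal_length_gradation
    (n : ℕ) (hn : 3 ≤ n)
    (V : Type*) [AddCommGroup V] [Module ℂ V]
    (e : ℕ → V)
    (hindep : LinearIndependent ℂ (fun i : Fin n => e (i.val + 1)))
    (hspan : Submodule.span ℂ (Set.range (fun i : Fin n => e (i.val + 1))) = ⊤)
    (B : V →ₗ[ℂ] V →ₗ[ℂ] V)
    (h1 : B (e 1) (e 1) = e 3)
    (h2 : ∀ i, 2 ≤ i → i ≤ n - 1 → B (e i) (e 1) = e (i + 1))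
    (h0 : ∀ i j, 1 ≤ i → i ≤ n → 1 ≤ j → j ≤ n →
      ¬(i = 1 ∧ j = 1) → ¬(j = 1 ∧ 2 ≤ i ∧ i ≤ n - 1) → B (e i) (e j) = 0)
    (W : ℤ → Submodule ℂ V)
    (hWm1 : W (-1) = Submodule.span ℂ {e 1 - e 2})
    (hWtop : W ((n : ℤ) - 2) = Submodule.span ℂ {e 2})
    (hWi : ∀ i : ℤ, 0 ≤ i → i ≤ (n : ℤ) - 3 → W i = Submodule.span ℂ {e (n - i.toNat)})
    (hWz : ∀ i : ℤ, i < -1 ∨ ((n : ℤ) - 3 < i ∧ i ≠ (n : ℤ) - 2) ∨ (n : ℤ) - 2 < i →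
      W i = ⊥) :
    (iSup W = ⊤) ∧ iSupIndep W ∧
    (∀ i j : ℤ, ∀ x ∈ W i, ∀ z ∈ W j, B x z ∈ W (i + j)) := by
  have h01 : (0:ℕ) < n := by omega
  have h11 : (1:ℕ) < n := by omega
  -- the new "graded" family of vectors
  set f : Fin n → V := fun k => if k.val = 0 then e 1 - e 2 else e (k.val + 1) with hf
  have hf0 : f ⟨0, h01⟩ = e 1 - e 2 := by simp [hf]
  have hf1 : f ⟨1, h11⟩ = e 2 := by simp [hf]
  have hfk : ∀ k : Fin n, k.val ≠ 0 → f k = e (k.val + 1) := by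
    intro k hk; simp [hf, hk]
  -- the degrees
  set gi : Fin n → ℤ := fun k =>
    if k.val = 0 then -1 else if k.val = 1 then (n:ℤ) - 2 else (n:ℤ) - 1 - k.val with hgi
  have hgi0 : gi ⟨0, h01⟩ = -1 := by simp [hgi]
  have hgi1 : gi ⟨1, h11⟩ = (n:ℤ) - 2 := by simp [hgi]
  have hgi2 : ∀ k : Fin n, 2 ≤ k.val → gi k = (n:ℤ) - 1 - k.val := by
    intro k hk
    simp only [hgi]
    rw [if_neg (by omega), if_neg (by omega)]
  -- basic bracket computations
  have hBne1 : ∀ a b : ℕ, 1 ≤ a → a ≤ n → 2 ≤ b → b ≤ n → B (e a) (e b) = 0 := by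
    intro a b ha1 ha2 hb1 hb2
    exact h0 a b ha1 ha2 (by omega) hb2 (by omega) (by omega)
  have hB21 : B (e 2) (e 1) = e 3 := h2 2 (by omega) (by omega)
  have hB22 : B (e 2) (e 2) = 0 := hBne1 2 2 (by omega) (by omega) (by omega) (by omega)
  have hB12 : B (e 1) (e 2) = 0 := hBne1 1 2 (by omega) (by omega) (by omega) (by omega)
  have hBn1 : B (e n) (e 1) = 0 :=
    h0 n 1 (by omega) (by omega) (by omega) (by omega) (by omega) (by omega)
  -- identification of the graded pieces
  have hWgi : ∀ k : Fin n, W (gi k) = Submodule.span ℂ {f k} := by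
    intro k
    by_cases hk0 : k.val = 0
    · have hk0' : k = ⟨0, h01⟩ := Fin.ext hk0
      rw [hk0', hgi0, hf0, hWm1]
    by_cases hk1 : k.val = 1
    · have hk1' : k = ⟨1, h11⟩ := Fin.ext hk1
      rw [hk1', hgi1, hf1, hWtop]
    · have hk2 : 2 ≤ k.val := by omega
      have hkn : k.val < n := k.isLt
      rw [hgi2 k hk2, hWi _ (by omega) (by omega)]
      have hval : n - ((n:ℤ) - 1 - (k.val:ℤ)).toNat = k.val + 1 := by omega
      rw [hval, hfk k hk0]
  -- classification of the indices
  have hclass : ∀ i : ℤ, W i = ⊥ ∨ i = -1 ∨ i = (n:ℤ) - 2 ∨ (0 ≤ i ∧ i ≤ (n:ℤ) - 3) := by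
    intro i
    by_cases h1' : i = -1
    · exact Or.inr (Or.inl h1')
    by_cases h2' : i = (n:ℤ) - 2
    · exact Or.inr (Or.inr (Or.inl h2'))
    by_cases h3' : 0 ≤ i ∧ i ≤ (n:ℤ) - 3
    · exact Or.inr (Or.inr (Or.inr h3'))
    · exact Or.inl (hWz i (by omega))
  have hWbot : ∀ i : ℤ, (∀ k : Fin n, gi k ≠ i) → W i = ⊥ := by
    intro i hk
    rcases hclass i with h | h | h | h
    · exact h
    · exact absurd (hgi0.trans h.symm) (hk _)
    · exact absurd (hgi1.trans h.symm) (hk _)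
    · obtain ⟨hi0, hi3⟩ := h
      have hlt : ((n:ℤ) - 1 - i).toNat < n := by omega
      have hge : 2 ≤ ((n:ℤ) - 1 - i).toNat := by omega
      have : gi ⟨((n:ℤ) - 1 - i).toNat, hlt⟩ = i := by
        rw [hgi2 _ hge]
        simp only []
        omega
      exact absurd this (hk _)
  -- linear independence of f
  have hfinrank : Module.finrank ℂ V = n := by
    rw [Module.finrank_eq_card_basis (Module.Basis.mk hindep hspan.ge), Fintype.card_fin]
  have hmemf : ∀ k : Fin n, f k ∈ Submodule.span ℂ (Set.range f) :=
    fun k => Submodule.subset_span ⟨k, rfl⟩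
  have hspanf : ⊤ ≤ Submodule.span ℂ (Set.range f) := by
    rw [← hspan]
    refine Submodule.span_le.mpr ?_
    rintro _ ⟨i, rfl⟩
    beta_reduce
    by_cases hk0 : i.val = 0
    · have : e (i.val + 1) = f ⟨0, h01⟩ + f ⟨1, h11⟩ := by
        rw [hf0, hf1, hk0]
        simp
      rw [this]
      exact Submodule.add_mem _ (hmemf _) (hmemf _)
    · rw [show e (i.val + 1) = f i from (hfk i hk0).symm]
      exact hmemf i
  have hfind : LinearIndependent ℂ f :=
    linearIndependent_of_top_le_span_of_card_eq_finrank hspanf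
      (by rw [Fintype.card_fin, hfinrank])
  -- Part 1 : the sum is everything
  have hmkW : ∀ k : Fin n, f k ∈ iSup W := by
    intro k
    have : f k ∈ W (gi k) := by
      rw [hWgi]; exact Submodule.mem_span_singleton_self _
    exact le_iSup W (gi k) this
  have htop : iSup W = ⊤ := by
    refine top_unique ?_
    rw [← hspan]
    refine Submodule.span_le.mpr ?_
    rintro _ ⟨i, rfl⟩
    beta_reduce
    by_cases hk0 : i.val = 0
    · have : e (i.val + 1) = f ⟨0, h01⟩ + f ⟨1, h11⟩ := by
        rw [hf0, hf1, hk0]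
        simp
      rw [this]
      exact Submodule.add_mem _ (hmkW _) (hmkW _)
    · rw [show e (i.val + 1) = f i from (hfk i hk0).symm]
      exact hmkW i
  -- Part 2 : independence
  have hind : iSupIndep W := by
    intro i
    by_cases hi : ∃ k : Fin n, gi k = i
    · obtain ⟨k, rfl⟩ := hi
      rw [hWgi k]
      refine Disjoint.mono_right ?_ (hfind.iSupIndep_span_singleton k)
      refine iSup_le fun j => iSup_le fun hj => ?_
      by_cases hj' : ∃ l : Fin n, gi l = j
      · obtain ⟨l, rfl⟩ := hj'
        have hlk : l ≠ k := fun h => hj (congrArg gi h)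
        rw [hWgi l]
        exact le_iSup_of_le l (le_iSup_of_le hlk le_rfl)
      · push_neg at hj'
        rw [hWbot _ hj']
        exact bot_le
    · push_neg at hi
      rw [hWbot _ hi]
      exact disjoint_bot_left
  -- Part 3 : graded bracket
  have hred : ∀ (w w' : V) (k : ℤ), B w w' ∈ W k →
      ∀ x ∈ Submodule.span ℂ {w}, ∀ z ∈ Submodule.span ℂ {w'}, B x z ∈ W k := by
    intro w w' k hww x hx z hz
    obtain ⟨c, rfl⟩ := Submodule.mem_span_singleton.mp hx
    obtain ⟨d, rfl⟩ := Submodule.mem_span_singleton.mp hz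
    have hcd : B (c • w) (d • w') = c • d • B w w' := by
      simp only [map_smul, LinearMap.smul_apply]
      rw [smul_comm]
    rw [hcd]
    exact Submodule.smul_mem _ _ (Submodule.smul_mem _ _ hww)
  have hbr : ∀ i j : ℤ, ∀ x ∈ W i, ∀ z ∈ W j, B x z ∈ W (i + j) := by
    intro i j x hx z hz
    rcases hclass i with hi | hi | hi | hi
    · rw [hi, Submodule.mem_bot] at hx
      subst hx
      simp only [map_zero, LinearMap.zero_apply]
      exact Submodule.zero_mem _
    · -- i = -1
      subst hi
      rw [hWm1] at hx
      rcases hclass j with hj | hj | hj | hj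
      · rw [hj, Submodule.mem_bot] at hz
        subst hz
        simp only [map_zero]
        exact Submodule.zero_mem _
      · subst hj
        rw [hWm1] at hz
        refine hred _ _ _ ?_ x hx z hz
        have hcalc : B (e 1 - e 2) (e 1 - e 2) = 0 := by
          simp only [map_sub, LinearMap.sub_apply, h1, hB21, hB12, hB22]
          simp
        rw [hcalc]
        exact Submodule.zero_mem _
      · subst hj
        rw [hWtop] at hz
        refine hred _ _ _ ?_ x hx z hz
        have hcalc : B (e 1 - e 2) (e 2) = 0 := by
          simp only [map_sub, LinearMap.sub_apply, hB12, hB22]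
          simp
        rw [hcalc]
        exact Submodule.zero_mem _
      · obtain ⟨hj0, hj3⟩ := hj
        rw [hWi j hj0 hj3] at hz
        refine hred _ _ _ ?_ x hx z hz
        have hcalc : B (e 1 - e 2) (e (n - j.toNat)) = 0 := by
          simp only [map_sub, LinearMap.sub_apply,
            hBne1 1 (n - j.toNat) (by omega) (by omega) (by omega) (by omega),
            hBne1 2 (n - j.toNat) (by omega) (by omega) (by omega) (by omega)]
          simp
        rw [hcalc]
        exact Submodule.zero_mem _
    · -- i = n - 2
      subst hi
      rw [hWtop] at hx
      rcases hclass j with hj | hj | hj | hj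
      · rw [hj, Submodule.mem_bot] at hz
        subst hz
        simp only [map_zero]
        exact Submodule.zero_mem _
      · subst hj
        rw [hWm1] at hz
        refine hred _ _ _ ?_ x hx z hz
        have hcalc : B (e 2) (e 1 - e 2) = e 3 := by
          rw [map_sub, hB21, hB22, sub_zero]
        have hWn3 : W ((n:ℤ) - 2 + -1) = Submodule.span ℂ {e 3} := by
          rw [show (n:ℤ) - 2 + -1 = (n:ℤ) - 3 by ring, hWi _ (by omega) (by omega)]
          have h3 : n - ((n:ℤ) - 3).toNat = 3 := by omega
          rw [h3]
        rw [hcalc, hWn3]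
        exact Submodule.mem_span_singleton_self _
      · subst hj
        rw [hWtop] at hz
        refine hred _ _ _ ?_ x hx z hz
        rw [hB22]
        exact Submodule.zero_mem _
      · obtain ⟨hj0, hj3⟩ := hj
        rw [hWi j hj0 hj3] at hz
        refine hred _ _ _ ?_ x hx z hz
        rw [hBne1 2 (n - j.toNat) (by omega) (by omega) (by omega) (by omega)]
        exact Submodule.zero_mem _
    · -- 0 ≤ i ≤ n - 3
      obtain ⟨hi0, hi3⟩ := hi
      rw [hWi i hi0 hi3] at hx
      rcases hclass j with hj | hj | hj | hj
      · rw [hj, Submodule.mem_bot] at hz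
        subst hz
        simp only [map_zero]
        exact Submodule.zero_mem _
      · subst hj
        rw [hWm1] at hz
        refine hred _ _ _ ?_ x hx z hz
        rcases eq_or_lt_of_le hi0 with hi0' | hi0'
        · have hnn : n - i.toNat = n := by omega
          have hcalc : B (e (n - i.toNat)) (e 1 - e 2) = 0 := by
            rw [hnn, map_sub, hBn1,
              hBne1 n 2 (by omega) (by omega) (by omega) (by omega), sub_zero]
          rw [hcalc]
          have : i + -1 = -1 := by omega
          rw [this]
          exact Submodule.zero_mem _
        · have hm2 : 2 ≤ n - i.toNat := by omega
          have hmn : n - i.toNat ≤ n - 1 := by omega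
          have hcalc : B (e (n - i.toNat)) (e 1 - e 2) = e (n - i.toNat + 1) := by
            rw [map_sub, h2 _ hm2 hmn,
              hBne1 (n - i.toNat) 2 (by omega) (by omega) (by omega) (by omega), sub_zero]
          rw [hcalc, hWi (i + -1) (by omega) (by omega)]
          have hval : n - (i + -1).toNat = n - i.toNat + 1 := by omega
          rw [hval]
          exact Submodule.mem_span_singleton_self _
      · subst hj
        rw [hWtop] at hz
        refine hred _ _ _ ?_ x hx z hz
        rw [hBne1 (n - i.toNat) 2 (by omega) (by omega) (by omega) (by omega)]
        exact Submodule.zero_mem _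
      · obtain ⟨hj0, hj3⟩ := hj
        rw [hWi j hj0 hj3] at hz
        refine hred _ _ _ ?_ x hx z hz
        rw [hBne1 (n - i.toNat) (n - j.toNat) (by omega) (by omega) (by omega) (by omega)]
        exact Submodule.zero_mem _
  exact ⟨htop, hind, hbr⟩
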